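/- arXiv:2502.03993 — 6 statements merged into one kernel-verified Lean document; each statement's English description precedes it below -/
import Mathlib

section
/- If tuples of positive integers a and b satisfy Landau's criterion sum_i floor(a_i x) - sum_j floor(b_j x) >= 0 for all x >= 0, then the ratio of factorials (a_1)! * ... * (a_r)! / ((b_1)! * ... * (b_s)!) is an integer. -/
lemma int_floor_nat_div (m n : ℕ) : ⌊(m : ℝ) / (n : ℝ)⌋ = (m / n : ℕ) := by
  rw [← Int.natCast_floor_eq_floor (by positivity), Nat.floor_div_eq_div]

theorem landau_implies_factorial_ratio_integral (r s : ℕ) (a : Fin r → ℕ) (b : Fin s → ℕ)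
    (ha : ∀ i, 0 < a i) (hb : ∀ j, 0 < b j)
    (h : ∀ x : ℝ, 0 ≤ x → (∑ j, ⌊(b j : ℝ) * x⌋) ≤ ∑ i, ⌊(a i : ℝ) * x⌋) :
    (∏ j, (b j).factorial) ∣ ∏ i, (a i).factorial := by
  have hbne : (∏ j, (b j).factorial) ≠ 0 := by positivity
  have hane : (∏ i, (a i).factorial) ≠ 0 := by positivity
  rw [← Nat.factorization_le_iff_dvd hbne hane, Finsupp.le_def]
  intro p
  by_cases hp : p.Prime
  · haveI : Fact p.Prime := ⟨hp⟩
    set B : ℕ := 1 + (∑ i, a i) + (∑ j, b j) with hB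
    have hlogb : ∀ j, Nat.log p (b j) < B := by
      intro j
      calc Nat.log p (b j) ≤ b j := Nat.log_le_self _ _
        _ ≤ ∑ j, b j := Finset.single_le_sum (fun _ _ => Nat.zero_le _) (Finset.mem_univ j)
        _ < B := by omega
    have hloga : ∀ i, Nat.log p (a i) < B := by
      intro i
      calc Nat.log p (a i) ≤ a i := Nat.log_le_self _ _
        _ ≤ ∑ i, a i := Finset.single_le_sum (fun _ _ => Nat.zero_le _) (Finset.mem_univ i)
        _ < B := by omega
    rw [Nat.factorization_prod (fun j _ => (Nat.factorial_pos _).ne'),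
        Nat.factorization_prod (fun i _ => (Nat.factorial_pos _).ne')]
    rw [Finset.sum_apply', Finset.sum_apply']
    have hbfac : ∀ j, ((b j).factorial.factorization) p = ∑ k ∈ Finset.Ico 1 B, b j / p ^ k := by
      intro j
      rw [Nat.factorization_def _ hp]
      exact padicValNat_factorial (hlogb j)
    have hafac : ∀ i, ((a i).factorial.factorization) p = ∑ k ∈ Finset.Ico 1 B, a i / p ^ k := by
      intro i
      rw [Nat.factorization_def _ hp]
      exact padicValNat_factorial (hloga i)
    simp only [hbfac, hafac]
    rw [Finset.sum_comm, Finset.sum_comm (s := Finset.univ)]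
    apply Finset.sum_le_sum
    intro k _
    -- key: apply h at x = 1 / p^k
    have hpk : (0:ℝ) < (p ^ k : ℕ) := by
      exact_mod_cast pow_pos hp.pos k
    have hx := h ((p ^ k : ℕ) : ℝ)⁻¹ (by positivity)
    have conv : ∀ n : ℕ, ⌊(n : ℝ) * ((p ^ k : ℕ) : ℝ)⁻¹⌋ = (n / p ^ k : ℕ) := by
      intro n
      rw [← div_eq_mul_inv, int_floor_nat_div]
    simp only [conv] at hx
    exact_mod_cast hx
  · rw [Nat.factorization_eq_zero_of_not_prime _ hp, Nat.factorization_eq_zero_of_not_prime _ hp]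
end

section
/- The product of two symmetric unimodal polynomials with nonnegative coefficients is symmetric and unimodal. -/
/-- A polynomial is symmetric (palindromic) if `c i = c (k - i)` where `k` is its degree. -/
def Polynomial.IsSymm (P : Polynomial ℤ) : Prop :=
  ∀ i ≤ P.natDegree, P.coeff i = P.coeff (P.natDegree - i)

/-- A polynomial is unimodal (in the symmetric sense) if its coefficients increase up to
the middle: `c 0 ≤ c 1 ≤ ⋯ ≤ c ⌊k/2⌋`. -/
def Polynomial.IsUnimodal (P : Polynomial ℤ) : Prop :=
  ∀ i, i + 1 ≤ P.natDegree / 2 → P.coeff i ≤ P.coeff (i + 1)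

/-- Coefficients extended to integer indices (zero for negative indices). -/
noncomputable def extC (R : Polynomial ℤ) (j : ℤ) : ℤ :=
  if 0 ≤ j then R.coeff j.toNat else 0

lemma extC_of_nonneg (R : Polynomial ℤ) {j : ℤ} (h : 0 ≤ j) :
    extC R j = R.coeff j.toNat := if_pos h

lemma extC_ofNat (R : Polynomial ℤ) (j : ℕ) : extC R (j : ℤ) = R.coeff j := by
  rw [extC_of_nonneg R (Int.natCast_nonneg j), Int.toNat_natCast]

lemma extC_neg (R : Polynomial ℤ) {j : ℤ} (h : j < 0) : extC R j = 0 :=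
  if_neg (not_le.2 h)

lemma extC_gt (R : Polynomial ℤ) {j : ℤ} (h : (R.natDegree : ℤ) < j) : extC R j = 0 := by
  rw [extC_of_nonneg R (by omega)]
  exact R.coeff_eq_zero_of_natDegree_lt (by omega)

lemma extC_nonneg (R : Polynomial ℤ) (h : ∀ i, 0 ≤ R.coeff i) (j : ℤ) : 0 ≤ extC R j := by
  unfold extC; split
  · exact h _
  · exact le_refl 0

lemma extC_symm (R : Polynomial ℤ) (hs : R.IsSymm) (j : ℤ) :
    extC R j = extC R ((R.natDegree : ℤ) - j) := by
  rcases lt_or_ge j 0 with h | h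
  · rw [extC_neg R h, extC_gt R (by omega)]
  rcases le_or_gt j (R.natDegree : ℤ) with h2 | h2
  · have hj : j.toNat ≤ R.natDegree := by omega
    rw [extC_of_nonneg R h, extC_of_nonneg R (by omega)]
    have : ((R.natDegree : ℤ) - j).toNat = R.natDegree - j.toNat := by omega
    rw [this]
    exact hs j.toNat hj
  · rw [extC_gt R h2, extC_neg R (by omega)]

lemma mono_nat (R : Polynomial ℤ) (hu : R.IsUnimodal) :
    ∀ q p : ℕ, p ≤ q → 2 * q ≤ R.natDegree → R.coeff p ≤ R.coeff q := by
  intro q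
  induction q with
  | zero => intro p hp _; rw [Nat.le_zero.mp hp]
  | succ q ih =>
      intro p hp hd
      rcases Nat.lt_or_ge p (q + 1) with h | h
      · have h1 : R.coeff p ≤ R.coeff q := ih p (by omega) (by omega)
        have h2 : R.coeff q ≤ R.coeff (q + 1) := hu q (by omega)
        exact h1.trans h2
      · rw [Nat.le_antisymm hp h]

lemma extC_mono (R : Polynomial ℤ) (hu : R.IsUnimodal) (hpos : ∀ i, 0 ≤ R.coeff i)
    {t u : ℤ} (htu : t ≤ u) (hud : 2 * u ≤ (R.natDegree : ℤ)) :
    extC R t ≤ extC R u := by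
  rcases lt_or_ge t 0 with h | h
  · rw [extC_neg R h]; exact extC_nonneg R hpos u
  · have hu0 : (0 : ℤ) ≤ u := le_trans h htu
    rw [extC_of_nonneg R h, extC_of_nonneg R hu0]
    exact mono_nat R hu u.toNat t.toNat (by omega) (by omega)

lemma extC_key (R : Polynomial ℤ) (hs : R.IsSymm) (hu : R.IsUnimodal)
    (hpos : ∀ i, 0 ≤ R.coeff i) {t s : ℤ} (hts : t ≤ s)
    (hsum : s + t ≤ (R.natDegree : ℤ)) : extC R t ≤ extC R s := by
  rcases le_or_gt (2 * s) (R.natDegree : ℤ) with h2 | h2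
  · exact extC_mono R hu hpos hts h2
  · rw [extC_symm R hs s]
    exact extC_mono R hu hpos (by omega) (by omega)

lemma sum_shift (f : ℤ → ℤ) (L U : ℤ) :
    ∑ i ∈ Finset.Icc L U, f i = ∑ i ∈ Finset.Icc (L + 1) (U + 1), f (i - 1) := by
  rw [← Finset.map_add_right_Icc L U 1, Finset.sum_map]
  simp [addRightEmbedding]

lemma sum_reflect (f : ℤ → ℤ) (L U c : ℤ) :
    ∑ i ∈ Finset.Icc L U, f i = ∑ i ∈ Finset.Icc (c - U) (c - L), f (c - i) := by
  refine Finset.sum_nbij' (fun i => c - i) (fun i => c - i) ?_ ?_ ?_ ?_ ?_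
  · intro a ha; simp only [Finset.mem_Icc] at *; omega
  · intro a ha; simp only [Finset.mem_Icc] at *; omega
  · intro a _; omega
  · intro a _; omega
  · intro a _; congr 1; omega

lemma coeff_mul_extC (P Q : Polynomial ℤ) (k : ℕ) {L U : ℤ} (hL : L ≤ 0) (hU : (k : ℤ) ≤ U) :
    (P * Q).coeff k = ∑ i ∈ Finset.Icc L U, extC P i * extC Q ((k : ℤ) - i) := by
  have base : (P * Q).coeff k = ∑ i ∈ Finset.Icc (0 : ℤ) (k : ℤ), extC P i * extC Q ((k : ℤ) - i) := by
    rw [Polynomial.coeff_mul, Finset.Nat.sum_antidiagonal_eq_sum_range_succ_mk]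
    refine Finset.sum_nbij' (fun i => (i : ℤ)) (fun i => i.toNat) ?_ ?_ ?_ ?_ ?_
    · intro a ha; simp only [Finset.mem_range] at ha; simp only [Finset.mem_Icc]; omega
    · intro a ha; simp only [Finset.mem_Icc] at ha; simp only [Finset.mem_range]; omega
    · intro a _; simp
    · intro a ha; simp only [Finset.mem_Icc] at ha; omega
    · intro a ha
      simp only [Finset.mem_range] at ha
      rw [extC_ofNat, show (k : ℤ) - (a : ℤ) = ((k - a : ℕ) : ℤ) by omega, extC_ofNat]
  rw [base]
  refine Finset.sum_subset ?_ ?_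
  · intro x hx; simp only [Finset.mem_Icc] at *; omega
  · intro x hx hx2
    simp only [Finset.mem_Icc, not_and, not_le] at hx hx2
    rcases lt_or_ge x 0 with h | h
    · rw [extC_neg P h, zero_mul]
    · rw [extC_neg Q (by omega), mul_zero]

lemma term_nonneg_aux (P Q : Polynomial ℤ)
    (hQpos : ∀ i, 0 ≤ Q.coeff i)
    (hQs : Q.IsSymm) (hPu : P.IsUnimodal) (hQu : Q.IsUnimodal)
    (hPpos : ∀ i, 0 ≤ P.coeff i)
    (k : ℕ) (hk : 2 * (k + 1) ≤ P.natDegree + Q.natDegree) (i : ℤ)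
    (hi : 2 * i ≤ (P.natDegree : ℤ)) :
    0 ≤ (extC P i - extC P (i - 1)) *
      (extC Q ((k : ℤ) + 1 - i) - extC Q ((k : ℤ) - P.natDegree + i)) := by
  apply mul_nonneg
  · have := extC_mono P hPu hPpos (show i - 1 ≤ i by omega) hi
    omega
  · have := extC_key Q hQs hQu hQpos
      (show (k : ℤ) - P.natDegree + i ≤ (k : ℤ) + 1 - i by omega)
      (show ((k : ℤ) + 1 - i) + ((k : ℤ) - P.natDegree + i) ≤ (Q.natDegree : ℤ) by
        omega)
    omega

lemma term_nonneg (P Q : Polynomial ℤ)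
    (hPpos : ∀ i, 0 ≤ P.coeff i) (hQpos : ∀ i, 0 ≤ Q.coeff i)
    (hPs : P.IsSymm) (hQs : Q.IsSymm) (hPu : P.IsUnimodal) (hQu : Q.IsUnimodal)
    (k : ℕ) (hk : 2 * (k + 1) ≤ P.natDegree + Q.natDegree) (i : ℤ) :
    0 ≤ (extC P i - extC P (i - 1)) *
      (extC Q ((k : ℤ) + 1 - i) - extC Q ((k : ℤ) - P.natDegree + i)) := by
  set m := P.natDegree with hm
  rcases le_or_gt (2 * i) (m : ℤ) with h | h
  · exact term_nonneg_aux P Q hQpos hQs hPu hQu hPpos k hk i h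
  rcases eq_or_lt_of_le (show (m : ℤ) + 1 ≤ 2 * i by omega) with h2 | h2
  · -- 2i = m+1, the term is zero
    have s1 : extC P i = extC P (i - 1) := by
      rw [extC_symm P hPs i]; congr 1; omega
    rw [s1, sub_self, zero_mul]
  · -- reflect to i' = m + 1 - i
    set i' : ℤ := (m : ℤ) + 1 - i with hi'
    have s1 : extC P i = extC P (i' - 1) := by
      rw [extC_symm P hPs i]; congr 1; omega
    have s2 : extC P (i - 1) = extC P i' := by
      rw [extC_symm P hPs (i - 1)]; congr 1; omega
    have e1 : (k : ℤ) + 1 - i = (k : ℤ) - m + i' := by omega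
    have e2 : (k : ℤ) - m + i = (k : ℤ) + 1 - i' := by omega
    rw [s1, s2, e1, e2]
    have h3 := term_nonneg_aux P Q hQpos hQs hPu hQu hPpos k hk i' (by omega)
    calc (0:ℤ) ≤ (extC P i' - extC P (i' - 1)) *
          (extC Q ((k : ℤ) + 1 - i') - extC Q ((k : ℤ) - m + i')) := h3
      _ = (extC P (i' - 1) - extC P i') *
          (extC Q ((k : ℤ) - m + i') - extC Q ((k : ℤ) + 1 - i')) := by ring

theorem mul_symm_unimodal (P Q : Polynomial ℤ) (hP : P ≠ 0) (hQ : Q ≠ 0)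
    (hPpos : ∀ i, 0 ≤ P.coeff i) (hQpos : ∀ i, 0 ≤ Q.coeff i)
    (hPs : P.IsSymm) (hQs : Q.IsSymm) (hPu : P.IsUnimodal) (hQu : Q.IsUnimodal) :
    (P * Q).IsSymm ∧ (P * Q).IsUnimodal := by
  have hD : (P * Q).natDegree = P.natDegree + Q.natDegree := Polynomial.natDegree_mul hP hQ
  set m := P.natDegree with hm
  set n := Q.natDegree with hn
  constructor
  · -- symmetry
    intro j hj
    rw [hD] at hj
    rw [hD]
    set L : ℤ := -((n : ℤ) + j + 1) with hL
    set U : ℤ := (m : ℤ) + n + j + 1 with hU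
    have h1 : (P * Q).coeff j = ∑ i ∈ Finset.Icc L U, extC P i * extC Q ((j : ℤ) - i) :=
      coeff_mul_extC P Q j (by omega) (by omega)
    have h2 : (P * Q).coeff (m + n - j)
        = ∑ i ∈ Finset.Icc L U, extC P i * extC Q (((m + n - j : ℕ) : ℤ) - i) :=
      coeff_mul_extC P Q (m + n - j) (by omega) (by omega)
    have hcast : ((m + n - j : ℕ) : ℤ) = (m : ℤ) + n - j := by omega
    rw [h1, h2, hcast]
    rw [sum_reflect (fun i => extC P i * extC Q ((m : ℤ) + n - j - i)) L U ((m : ℤ))]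
    have hLU1 : (m : ℤ) - U = L := by omega
    have hLU2 : (m : ℤ) - L = U := by omega
    rw [hLU1, hLU2]
    refine Finset.sum_congr rfl ?_
    intro i _
    have e1 : extC P i = extC P ((m : ℤ) - i) := extC_symm P hPs i
    have e2 : extC Q ((j : ℤ) - i) = extC Q ((m : ℤ) + n - j - ((m : ℤ) - i)) := by
      rw [extC_symm Q hQs ((j : ℤ) - i)]; congr 1; omega
    rw [e1, e2]
  · -- unimodality
    intro k hk
    rw [hD] at hk
    have hk2 : 2 * (k + 1) ≤ m + n := by omega
    set L : ℤ := -((k : ℤ) + 2) with hL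
    set U : ℤ := (m : ℤ) + k + 3 with hU
    have h1 : (P * Q).coeff (k + 1)
        = ∑ i ∈ Finset.Icc L U, extC P i * extC Q (((k + 1 : ℕ) : ℤ) - i) :=
      coeff_mul_extC P Q (k + 1) (by omega) (by omega)
    have h0 : (P * Q).coeff k
        = ∑ i ∈ Finset.Icc (L - 1) (U - 1), extC P i * extC Q ((k : ℤ) - i) :=
      coeff_mul_extC P Q k (by omega) (by omega)
    have h0' : (P * Q).coeff k
        = ∑ i ∈ Finset.Icc L U, extC P (i - 1) * extC Q ((k : ℤ) + 1 - i) := by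
      rw [h0, sum_shift (fun i => extC P i * extC Q ((k : ℤ) - i)) (L - 1) (U - 1)]
      rw [show L - 1 + 1 = L by ring, show U - 1 + 1 = U by ring]
      refine Finset.sum_congr rfl ?_
      intro i _
      congr 2
      omega
    have hcast : ((k + 1 : ℕ) : ℤ) = (k : ℤ) + 1 := by omega
    rw [hcast] at h1
    set S : ℤ := ∑ i ∈ Finset.Icc L U,
      (extC P i - extC P (i - 1)) * extC Q ((k : ℤ) + 1 - i) with hS
    have hdiff : (P * Q).coeff (k + 1) - (P * Q).coeff k = S := by
      rw [h1, h0', hS, ← Finset.sum_sub_distrib]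
      refine Finset.sum_congr rfl ?_
      intro i _
      ring
    -- reflection: S also equals the reflected sum
    have hrefl : S = ∑ i ∈ Finset.Icc L U,
        (extC P (i - 1) - extC P i) * extC Q ((k : ℤ) - m + i) := by
      rw [hS, sum_reflect (fun i => (extC P i - extC P (i - 1)) * extC Q ((k : ℤ) + 1 - i))
        L U ((m : ℤ) + 1)]
      have hLU1 : (m : ℤ) + 1 - U = L := by omega
      have hLU2 : (m : ℤ) + 1 - L = U := by omega
      rw [hLU1, hLU2]
      refine Finset.sum_congr rfl ?_
      intro i _
      have s1 : extC P ((m : ℤ) + 1 - i) = extC P (i - 1) := by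
        rw [extC_symm P hPs (i - 1)]; congr 1; omega
      have s2 : extC P ((m : ℤ) + 1 - i - 1) = extC P i := by
        rw [extC_symm P hPs i]; congr 1; omega
      rw [s1, s2]
      congr 2
      omega
    have h2S : 0 ≤ S + S := by
      nth_rewrite 2 [hrefl]
      rw [← Finset.sum_add_distrib]
      refine Finset.sum_nonneg ?_
      intro i _
      have := term_nonneg P Q hPpos hQpos hPs hQs hPu hQu k (by omega) i
      calc (0:ℤ) ≤ (extC P i - extC P (i - 1)) *
            (extC Q ((k : ℤ) + 1 - i) - extC Q ((k : ℤ) - m + i)) := this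
        _ = (extC P i - extC P (i - 1)) * extC Q ((k : ℤ) + 1 - i) +
            (extC P (i - 1) - extC P i) * extC Q ((k : ℤ) - m + i) := by ring
    omega
end

section
/- Let P(q) = sum_{i=0}^{2k} c_i q^i be a polynomial with integer coefficients such that c_i = c_{2k-i} for all i and c_0 = 1. If (1+q) P(q) is symmetric and unimodal, then all coefficients c_i of P are nonnegative. -/
open Polynomial in
theorem unimodal_one_add_q_mul_implies_positive (k : ℕ) (c : ℕ → ℤ)
    (hc0 : c 0 = 1) (hsym : ∀ i ≤ 2 * k, c i = c (2 * k - i))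
    (P : Polynomial ℤ) (hP : P = ∑ i ∈ Finset.range (2 * k + 1), C (c i) * X ^ i)
    (hQsym : ∀ i ≤ 2 * k + 1, ((1 + X) * P).coeff i = ((1 + X) * P).coeff (2 * k + 1 - i))
    (hQuni : ∀ i, i + 1 ≤ k → ((1 + X) * P).coeff i ≤ ((1 + X) * P).coeff (i + 1)) :
    ∀ i ≤ 2 * k, 0 ≤ c i := by
  have hPc : ∀ j, P.coeff j = if j < 2 * k + 1 then c j else 0 := by
    intro j
    simp only [hP, Polynomial.finset_sum_coeff, Polynomial.coeff_C_mul,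
      Polynomial.coeff_X_pow, mul_ite, mul_one, mul_zero]
    rw [Finset.sum_ite_eq (Finset.range (2 * k + 1)) j c]
    simp [Finset.mem_range]
  have hQ0 : ((1 + X) * P).coeff 0 = c 0 := by
    simp [Polynomial.mul_coeff_zero, hPc]
  have hQs : ∀ j, ((1 + X) * P).coeff (j + 1) = P.coeff (j + 1) + P.coeff j := by
    intro j
    rw [add_mul, one_mul, Polynomial.coeff_add, Polynomial.coeff_X_mul]
  -- nonnegativity for i ≤ k by strong induction (two-step)
  have key : ∀ i, i ≤ k → 0 ≤ c i := by
    intro i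
    induction i using Nat.strong_induction_on with
    | _ i ih =>
      match i with
      | 0 => intro _; rw [hc0]; norm_num
      | 1 =>
        intro h1
        have := hQuni 0 (by omega)
        rw [hQ0, hQs 0] at this
        rw [hPc 0, hPc 1] at this
        have h2 : (0:ℕ) < 2 * k + 1 := by omega
        have h3 : (1:ℕ) < 2 * k + 1 := by omega
        simp only [if_pos h2, if_pos h3] at this
        linarith
      | (i + 2) =>
        intro h2
        have hih := ih i (by omega) (by omega)
        have := hQuni (i + 1) (by omega)
        rw [hQs i, hQs (i+1)] at this
        rw [hPc i, hPc (i+1), hPc (i+2)] at this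
        have ha : i < 2 * k + 1 := by omega
        have hb : i + 1 < 2 * k + 1 := by omega
        have hd : i + 2 < 2 * k + 1 := by omega
        simp only [if_pos ha, if_pos hb, if_pos hd] at this
        linarith
  intro i hi
  rcases le_or_gt i k with h | h
  · exact key i h
  · rw [hsym i hi]
    exact key (2 * k - i) (by omega)
end

section
/- Let P(q) = sum_{i=0}^{2k} c_i q^i with c_i = c_{2k-i} for all i. Then Q(q) = (1+q) P(q) is unimodal (as a symmetric polynomial of odd degree 2k+1) if and only if c_0 <= c_2 <= ... <= c_{2*floor(k/2)} and c_{2*ceil(k/2)-1} >= ... >= c_3 >= c_1 >= 0. -/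
open Polynomial in
theorem unimodal_one_add_q_mul_iff_even_case (k : ℕ) (hk : 1 ≤ k) (c : ℕ → ℤ)
    (hsym : ∀ i ≤ 2 * k, c i = c (2 * k - i))
    (P : Polynomial ℤ) (hP : P = ∑ i ∈ Finset.range (2 * k + 1), C (c i) * X ^ i) :
    -- `Q = (1+q)P` is unimodal as a symmetric polynomial of odd degree `2k+1`
    (∀ i, i + 1 ≤ k → ((1 + X) * P).coeff i ≤ ((1 + X) * P).coeff (i + 1)) ↔
      ((∀ i, 2 * (i + 1) ≤ 2 * (k / 2) → c (2 * i) ≤ c (2 * (i + 1))) ∧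
       (∀ i, 2 * i + 3 ≤ 2 * ((k + 1) / 2) - 1 → c (2 * i + 1) ≤ c (2 * i + 3)) ∧
       0 ≤ c 1) := by
  have hPc : ∀ i, i ≤ 2 * k → P.coeff i = c i := by
    intro i hi
    simp only [hP, finset_sum_coeff, coeff_C_mul, coeff_X_pow, mul_ite, mul_one, mul_zero]
    rw [Finset.sum_ite_eq (Finset.range (2 * k + 1)) i c]
    simp only [Finset.mem_range, if_pos (by omega : i < 2 * k + 1)]
  have hQ : ∀ n, n + 1 ≤ k → ((1 + X) * P).coeff (n + 1) = c (n + 1) + c n := by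
    intro n hn
    rw [add_mul, one_mul, coeff_add, coeff_X_mul, hPc (n + 1) (by omega), hPc n (by omega)]
  have hQ0 : ((1 + X) * P).coeff 0 = c 0 := by
    rw [add_mul, one_mul, coeff_add, mul_coeff_zero]
    simp [hPc 0 (by omega)]
  constructor
  · intro h
    have hstep : ∀ j, j + 2 ≤ k → c j ≤ c (j + 2) := by
      intro j hj
      have h1 := h (j + 1) (by omega)
      rw [hQ j (by omega), hQ (j + 1) (by omega)] at h1
      linarith
    have h0 : 0 ≤ c 1 := by
      have h1 := h 0 (by omega)
      rw [hQ0, hQ 0 (by omega)] at h1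
      linarith
    refine ⟨?_, ?_, h0⟩
    · intro i hi
      have h2 := hstep (2 * i) (by omega)
      have e : 2 * i + 2 = 2 * (i + 1) := by ring
      rw [e] at h2
      exact h2
    · intro i hi
      have h2 := hstep (2 * i + 1) (by omega)
      have e : 2 * i + 1 + 2 = 2 * i + 3 := by ring
      rw [e] at h2
      exact h2
  · rintro ⟨he, ho, h1⟩ i hi
    cases i with
    | zero =>
      rw [hQ0, hQ 0 (by omega)]
      linarith
    | succ j =>
      rw [hQ j (by omega), hQ (j + 1) (by omega)]
      have hj : c j ≤ c (j + 2) := by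
        rcases Nat.even_or_odd j with hj2 | hj2
        · obtain ⟨m, rfl⟩ := hj2
          have h2 := he m (by omega)
          have e1 : 2 * m = m + m := by ring
          have e2 : 2 * (m + 1) = m + m + 2 := by ring
          rw [e1, e2] at h2
          exact h2
        · obtain ⟨m, rfl⟩ := hj2
          have h2 := ho m (by omega)
          have e2 : 2 * m + 3 = 2 * m + 1 + 2 := by ring
          rw [e2] at h2
          exact h2
      linarith
end

section
/- For all nonnegative integers m >= n, the quantity B(m,n;q) = [2m]![n]! / ([m]![m-n]![2n]!) is a polynomial in q with nonnegative integer coefficients. -/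
open Polynomial Finset

/-- The `q`-factorial `[n]! = [1][2]⋯[n]` with `[m] = 1 + q + ⋯ + q^{m-1}`, in `ℤ[q]`. -/
noncomputable def qFact (n : ℕ) : Polynomial ℤ :=
  ∏ i ∈ range n, ∑ j ∈ range (i + 1), X ^ j

/-- The `q`-integer `[k] = 1 + q + ⋯ + q^{k-1}`. -/
noncomputable def qInt (k : ℕ) : Polynomial ℤ :=
  ∑ j ∈ range k, X ^ j

lemma qFact_zero : qFact 0 = 1 := by simp [qFact]

lemma qFact_succ (n : ℕ) : qFact (n + 1) = qFact n * qInt (n + 1) := by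
  rw [qFact, qFact, Finset.prod_range_succ]; rfl

lemma qInt_add (u v : ℕ) : qInt (u + v) = qInt u + X ^ u * qInt v := by
  rw [qInt, qInt, qInt, Finset.sum_range_add, Finset.mul_sum]
  simp [pow_add]

lemma qInt_mul_X_sub_one (k : ℕ) : qInt k * (X - 1 : Polynomial ℤ) = X ^ k - 1 :=
  geom_sum_mul X k

lemma coeff_nonneg_one : ∀ i, (0:ℤ) ≤ (1 : Polynomial ℤ).coeff i := by
  intro i; rw [coeff_one]; split <;> norm_num

lemma coeff_nonneg_Xpow (e : ℕ) : ∀ i, (0:ℤ) ≤ ((X:Polynomial ℤ) ^ e).coeff i := by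
  intro i; rw [coeff_X_pow]; split <;> norm_num

lemma coeff_nonneg_add {p q : Polynomial ℤ} (hp : ∀ i, 0 ≤ p.coeff i)
    (hq : ∀ i, 0 ≤ q.coeff i) : ∀ i, 0 ≤ (p + q).coeff i := by
  intro i; rw [coeff_add]; exact add_nonneg (hp i) (hq i)

lemma coeff_nonneg_mul {p q : Polynomial ℤ} (hp : ∀ i, 0 ≤ p.coeff i)
    (hq : ∀ i, 0 ≤ q.coeff i) : ∀ i, 0 ≤ (p * q).coeff i := by
  intro i; rw [coeff_mul]
  exact Finset.sum_nonneg fun x _ => mul_nonneg (hp _) (hq _)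

/-- The key three-term `q`-integer identity, with `m = k+s+2`, `n = k+1`:
`[2m][2m-1][n] = q^{m-n}[m][2n][2n-1] + (1+q^{m+n-1}+q^{m+2n-1}+q^{2m+n-1})[m][m-n][n]`. -/
lemma star (s k : ℕ) :
    qInt (2*k+2*s+4) * qInt (2*k+2*s+3) * qInt (k+1)
      = X ^ (s+1) * (qInt (k+s+2) * qInt (2*k+2) * qInt (2*k+1))
        + (1 + X ^ (s+2*k+2) + X ^ (s+3*k+3) + X ^ (2*s+3*k+4)) *
            (qInt (k+s+2) * qInt (s+1) * qInt (k+1)) := by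
  have hX : (X - 1 : Polynomial ℤ) ≠ 0 := by
    simpa using Polynomial.X_sub_C_ne_zero (1 : ℤ)
  apply mul_right_cancel₀ (pow_ne_zero 3 hX)
  have gs := qInt_mul_X_sub_one
  calc qInt (2*k+2*s+4) * qInt (2*k+2*s+3) * qInt (k+1) * (X - 1) ^ 3
      = (qInt (2*k+2*s+4) * (X-1)) * ((qInt (2*k+2*s+3) * (X-1)) * (qInt (k+1) * (X-1))) := by
        ring
    _ = (X^(2*k+2*s+4) - 1) * ((X^(2*k+2*s+3) - 1) * (X^(k+1) - 1)) := by
        simp only [gs]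
    _ = X ^ (s+1) * ((X^(k+s+2) - 1) * ((X^(2*k+2) - 1) * (X^(2*k+1) - 1)))
        + (1 + X ^ (s+2*k+2) + X ^ (s+3*k+3) + X ^ (2*s+3*k+4)) *
            ((X^(k+s+2) - 1) * ((X^(s+1) - 1) * (X^(k+1) - 1))) := by
        ring
    _ = X ^ (s+1) * ((qInt (k+s+2) * (X-1)) * ((qInt (2*k+2) * (X-1)) * (qInt (2*k+1) * (X-1))))
        + (1 + X ^ (s+2*k+2) + X ^ (s+3*k+3) + X ^ (2*s+3*k+4)) *
            ((qInt (k+s+2) * (X-1)) * ((qInt (s+1) * (X-1)) * (qInt (k+1) * (X-1)))) := by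
        simp only [gs]
    _ = (X ^ (s+1) * (qInt (k+s+2) * qInt (2*k+2) * qInt (2*k+1))
        + (1 + X ^ (s+2*k+2) + X ^ (s+3*k+3) + X ^ (2*s+3*k+4)) *
            (qInt (k+s+2) * qInt (s+1) * qInt (k+1))) * (X - 1) ^ 3 := by
        ring

/-- Positivity of Gaussian binomial coefficients. -/
lemma gauss : ∀ a b : ℕ, b ≤ a → ∃ P : Polynomial ℤ, (∀ i, 0 ≤ P.coeff i) ∧
    qFact b * qFact (a - b) * P = qFact a := by
  intro a
  induction a with
  | zero =>
    intro b hb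
    obtain rfl := Nat.le_zero.mp hb
    exact ⟨1, coeff_nonneg_one, by simp [qFact_zero]⟩
  | succ a ih =>
    intro b hb
    rcases Nat.eq_zero_or_pos b with rfl | hb0
    · exact ⟨1, coeff_nonneg_one, by simp [qFact_zero]⟩
    rcases eq_or_lt_of_le hb with rfl | hlt
    · exact ⟨1, coeff_nonneg_one, by simp [qFact_zero]⟩
    obtain ⟨b', rfl⟩ : ∃ b', b = b' + 1 := ⟨b - 1, by omega⟩
    obtain ⟨s, rfl⟩ : ∃ s, a = b' + 1 + s := ⟨a - (b' + 1), by omega⟩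
    obtain ⟨P₁, h1p, h1⟩ := ih b' (by omega)
    obtain ⟨P₂, h2p, h2⟩ := ih (b' + 1) (by omega)
    refine ⟨P₁ + X ^ (b' + 1) * P₂, coeff_nonneg_add h1p
      (coeff_nonneg_mul (coeff_nonneg_Xpow _) h2p), ?_⟩
    have e1 : b' + 1 + s - b' = s + 1 := by omega
    have e2 : b' + 1 + s - (b' + 1) = s := by omega
    rw [e1] at h1
    rw [e2] at h2
    have e3 : b' + 1 + s + 1 - (b' + 1) = s + 1 := by omega
    rw [e3, qFact_succ (b' + 1 + s), qFact_succ b', qFact_succ s]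
    have hsplit : qInt (b' + 1 + s + 1) = qInt (b' + 1) + X ^ (b' + 1) * qInt (s + 1) := by
      have : b' + 1 + s + 1 = (b' + 1) + (s + 1) := by omega
      rw [this, qInt_add]
    rw [qFact_succ s] at h1
    rw [qFact_succ b'] at h2
    linear_combination (qInt (b' + 1)) * h1 + (X ^ (b' + 1) * qInt (s + 1)) * h2
      - qFact (b' + 1 + s) * hsplit

theorem B_polynomial_nonneg (m n : ℕ) (h : n ≤ m) :
    ∃ P : Polynomial ℤ, (∀ i, 0 ≤ P.coeff i) ∧
      qFact m * qFact (m - n) * qFact (2 * n) * P = qFact (2 * m) * qFact n := by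
  induction m generalizing n with
  | zero =>
    obtain rfl := Nat.le_zero.mp h
    exact ⟨1, coeff_nonneg_one, by simp [qFact_zero]⟩
  | succ m ih =>
    rcases n with _ | k
    · -- n = 0 : Gaussian binomial
      obtain ⟨P, hp, hP⟩ := gauss (2 * (m + 1)) (m + 1) (by omega)
      have e : 2 * (m + 1) - (m + 1) = m + 1 := by omega
      rw [e] at hP
      refine ⟨P, hp, ?_⟩
      simpa [qFact_zero] using hP
    rcases eq_or_lt_of_le h with heq | hlt
    · -- n = m + 1
      obtain rfl : k = m := by omega
      refine ⟨1, coeff_nonneg_one, ?_⟩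
      rw [Nat.sub_self]
      simp [qFact_zero]; ring
    -- 1 ≤ n = k+1 ≤ m
    obtain ⟨s, rfl⟩ : ∃ s, m = k + 1 + s := ⟨m - (k + 1), by omega⟩
    obtain ⟨P₁, h1p, h1⟩ := ih k (by omega)
    obtain ⟨P₂, h2p, h2⟩ := ih (k + 1) (by omega)
    have cnn : ∀ i, (0:ℤ) ≤ ((1 + X ^ (s+2*k+2) + X ^ (s+3*k+3) + X ^ (2*s+3*k+4) :
        Polynomial ℤ)).coeff i :=
      coeff_nonneg_add (coeff_nonneg_add (coeff_nonneg_add coeff_nonneg_one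
        (coeff_nonneg_Xpow _)) (coeff_nonneg_Xpow _)) (coeff_nonneg_Xpow _)
    refine ⟨X ^ (s+1) * P₁ + (1 + X ^ (s+2*k+2) + X ^ (s+3*k+3) + X ^ (2*s+3*k+4)) * P₂,
      coeff_nonneg_add (coeff_nonneg_mul (coeff_nonneg_Xpow _) h1p)
        (coeff_nonneg_mul cnn h2p), ?_⟩
    -- normalize the ℕ arguments
    have a1 : k + 1 + s - k = s + 1 := by omega
    have a2 : 2 * (k + 1 + s) = 2*k + 2*s + 1 + 1 := by omega
    rw [a1, a2] at h1
    have a3 : k + 1 + s - (k + 1) = s := by omega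
    have a4 : 2 * (k + 1) = 2*k + 1 + 1 := by omega
    rw [a3, a4, a2] at h2
    have a5 : k + 1 + s + 1 - (k + 1) = s + 1 := by omega
    have a6 : 2 * (k + 1 + s + 1) = 2*k + 2*s + 1 + 1 + 1 + 1 := by omega
    rw [a5, a4, a6]
    -- expand factorials
    rw [qFact_succ (2*k+2*s+1+1+1), qFact_succ (2*k+2*s+1+1), qFact_succ (2*k+2*s+1),
      qFact_succ (k+1+s), qFact_succ (2*k+1), qFact_succ (2*k), qFact_succ s, qFact_succ k]
    rw [qFact_succ (2*k+2*s+1), qFact_succ s] at h1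
    rw [qFact_succ (2*k+2*s+1), qFact_succ (2*k+1), qFact_succ (2*k), qFact_succ k] at h2
    have hstar := star s k
    have b1 : 2*k+2*s+4 = 2*k+2*s+1+1+1+1 := by omega
    have b2 : 2*k+2*s+3 = 2*k+2*s+1+1+1 := by omega
    have b3 : 2*k+2*s+2 = 2*k+2*s+1+1 := by omega
    have b4 : k+s+2 = k+1+s+1 := by omega
    have b5 : 2*k+2 = 2*k+1+1 := by omega
    rw [b1, b2, b4, b5] at hstar
    linear_combination
      (qInt (k+1+s+1) * qInt (2*k+1) * qInt (2*k+1+1) * X ^ (s+1)) * h1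
      + ((1 + X ^ (s+2*k+2) + X ^ (s+3*k+3) + X ^ (2*s+3*k+4)) * qInt (k+1+s+1)
          * qInt (s+1)) * h2
      - (qFact (2*k+2*s+1) * qInt (2*k+2*s+1+1) * qFact k) * hstar
end

section
/- For all nonnegative integers m, n, the quantity C(m,n;q) = [2m]![2n]! / ([m]![m+n]![n]!) is a polynomial in q with integer coefficients. -/
open Polynomial Finset

lemma qnum_eq (k : ℕ) :
    (∑ j ∈ range (k + 1), (X : Polynomial ℤ) ^ j)
      = ∏ d ∈ (k + 1).divisors.erase 1, cyclotomic d ℤ := by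
  have h1 : (1 : ℕ) ∈ (k + 1).divisors := Nat.one_mem_divisors.mpr (Nat.succ_ne_zero k)
  have hprod := prod_cyclotomic_eq_X_pow_sub_one (Nat.succ_pos k) ℤ
  rw [← Finset.prod_erase_mul _ _ h1, cyclotomic_one] at hprod
  have hg := geom_sum_mul (X : Polynomial ℤ) (k + 1)
  have hx : (X - 1 : Polynomial ℤ) ≠ 0 := by
    have := Polynomial.X_sub_C_ne_zero (1 : ℤ)
    simpa using this
  exact mul_right_cancel₀ hx (hg.trans hprod.symm)

lemma qFact_eq (N D : ℕ) (h : N < D) :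
    qFact N = ∏ d ∈ Finset.Ico 2 D, cyclotomic d ℤ ^ (N / d) := by
  induction N with
  | zero =>
      simp [qFact, Nat.div_eq_of_lt]
  | succ N ih =>
      have hND : N < D := Nat.lt_of_succ_lt h
      have hfilter : Finset.filter (· ∣ (N + 1)) (Finset.Ico 2 D) = (N + 1).divisors.erase 1 := by
        ext d
        simp only [Finset.mem_filter, Finset.mem_Ico, Finset.mem_erase, Nat.mem_divisors]
        constructor
        · rintro ⟨⟨h2, _⟩, hdvd⟩
          exact ⟨by omega, hdvd, Nat.succ_ne_zero N⟩
        · rintro ⟨hne, hdvd, -⟩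
          have hdpos : 0 < d := Nat.pos_of_dvd_of_pos hdvd (Nat.succ_pos N)
          have hle : d ≤ N + 1 := Nat.le_of_dvd (Nat.succ_pos N) hdvd
          exact ⟨⟨by omega, by omega⟩, hdvd⟩
      have hstep : qFact (N + 1) = qFact N * ∑ j ∈ range (N + 1), (X : Polynomial ℤ) ^ j := by
        rw [qFact, Finset.prod_range_succ]; rfl
      rw [hstep, ih hND, qnum_eq, ← hfilter, Finset.prod_filter, ← Finset.prod_mul_distrib]
      apply Finset.prod_congr rfl
      intro d hd
      rw [Nat.succ_div]
      split_ifs with hdvd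
      · rw [pow_add, pow_one]
      · rw [Nat.add_zero, mul_one]

lemma key_ineq (m n d : ℕ) (hd : 0 < d) :
    m / d + (m + n) / d + n / d ≤ 2 * m / d + 2 * n / d := by
  rw [two_mul, two_mul, Nat.add_div hd, Nat.add_div hd, Nat.add_div hd]
  have hm := Nat.mod_lt m hd
  have hn := Nat.mod_lt n hd
  split_ifs <;> omega

theorem C_super_catalan_polynomial (m n : ℕ) :
    ∃ P : Polynomial ℤ,
      qFact m * qFact (m + n) * qFact n * P = qFact (2 * m) * qFact (2 * n) := by
  set D := 2 * m + 2 * n + 1 with hD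
  refine ⟨∏ d ∈ Finset.Ico 2 D,
    cyclotomic d ℤ ^ (2 * m / d + 2 * n / d - (m / d + (m + n) / d + n / d)), ?_⟩
  rw [qFact_eq m D (by omega), qFact_eq (m + n) D (by omega), qFact_eq n D (by omega),
    qFact_eq (2 * m) D (by omega), qFact_eq (2 * n) D (by omega),
    ← Finset.prod_mul_distrib, ← Finset.prod_mul_distrib, ← Finset.prod_mul_distrib,
    ← Finset.prod_mul_distrib]
  apply Finset.prod_congr rfl
  intro d hd
  have hdpos : 0 < d := by
    have := Finset.mem_Ico.mp hd
    omega
  rw [← pow_add, ← pow_add, ← pow_add, ← pow_add]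
  congr 1
  have := key_ineq m n d hdpos
  omega
end
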